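/- Let D be an integral domain whose complete integral closure D'' equals a localization D_S at a multiplicative subset S of D. Then D is completely integrally closed if and only if D is Archimedean. -/

import Mathlib

open scoped nonZeroDivisors

variable (D : Type*) [CommRing D] [IsDomain D]
variable (K : Type*) [Field K] [Algebra D K] [IsFractionRing D K]

/-- The complete integral closure of `D` inside `K`. -/
def completeIntegralClosureSet : Set K :=
  {x : K | ∃ r : D, r ≠ 0 ∧ ∀ n : ℕ, 1 ≤ n →
    ∃ d : D, algebraMap D K d = algebraMap D K r * x ^ n}

/-- `D` is completely integrally closed: `D = D''`. -/
def IsCompletelyIntegrallyClosed : Prop :=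
  ∀ x ∈ completeIntegralClosureSet D K, ∃ d : D, algebraMap D K d = x

/-- `D` is Archimedean: `⋂_{n ≥ 1} x^n D = (0)` for every nonunit `x ∈ D`. -/
def IsArchimedean : Prop :=
  ∀ x : D, ¬ IsUnit x → (⨅ (n : ℕ) (_ : 1 ≤ n), Ideal.span {x ^ n}) = ⊥

/-- If the complete integral closure `D''` of `D` equals the localization `D_S` of `D`
at a multiplicative subset `S` of `D` (viewed inside the quotient field `K`), then
`D` is completely integrally closed iff `D` is Archimedean. -/
theorem stmt_8 (S : Submonoid D) (hS0 : (0 : D) ∉ S)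
    (hS : completeIntegralClosureSet D K =
      {x : K | ∃ d : D, ∃ s ∈ S, algebraMap D K s * x = algebraMap D K d}) :
    IsCompletelyIntegrallyClosed D K ↔ IsArchimedean D := by

  have inj : Function.Injective (algebraMap D K) := IsFractionRing.injective D K
  constructor
  · intro hcic x hx
    rw [eq_bot_iff]
    intro y hy
    simp only [Ideal.mem_iInf] at hy
    rw [Ideal.mem_bot]
    by_contra hy0
    have hx0 : x ≠ 0 := by
      rintro rfl
      have := hy 1 le_rfl
      simp [Ideal.span_singleton_eq_bot.mpr] at this
      exact hy0 this
    have hxK : algebraMap D K x ≠ 0 := fun h => hx0 (inj (by simpa using h))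
    have hmem : (algebraMap D K x)⁻¹ ∈ completeIntegralClosureSet D K := by
      refine ⟨y, hy0, fun n hn => ?_⟩
      obtain ⟨a, ha⟩ := Ideal.mem_span_singleton'.mp (hy n hn)
      refine ⟨a, ?_⟩
      have := congrArg (algebraMap D K) ha
      rw [map_mul, map_pow] at this
      field_simp
      rw [← this, one_div, inv_pow, mul_assoc, mul_inv_cancel₀ (pow_ne_zero n hxK), mul_one]
    obtain ⟨d, hd⟩ := hcic _ hmem
    have : x * d = 1 := by
      apply inj
      rw [map_mul, hd, map_one, mul_inv_cancel₀ hxK]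
    exact hx (IsUnit.of_mul_eq_one d this)
  · intro harch x hx
    rw [hS] at hx
    obtain ⟨d, s, hs, hxs⟩ := hx
    have hs0 : s ≠ 0 := fun h => hS0 (h ▸ hs)
    have hsK : algebraMap D K s ≠ 0 := fun h => hs0 (inj (by simpa using h))
    have hsu : IsUnit s := by
      by_contra hsu
      have h1 : (algebraMap D K s)⁻¹ ∈ completeIntegralClosureSet D K := by
        rw [hS]
        exact ⟨1, s, hs, by rw [mul_inv_cancel₀ hsK, map_one]⟩
      obtain ⟨r, hr0, hr⟩ := h1
      have hrmem : r ∈ ⨅ (n : ℕ) (_ : 1 ≤ n), Ideal.span {s ^ n} := by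
        simp only [Ideal.mem_iInf]
        intro n hn
        obtain ⟨dn, hdn⟩ := hr n hn
        refine Ideal.mem_span_singleton'.mpr ⟨dn, inj ?_⟩
        rw [map_mul, map_pow, hdn, inv_pow]
        field_simp
      rw [harch s hsu, Ideal.mem_bot] at hrmem
      exact hr0 hrmem
    obtain ⟨u, rfl⟩ := hsu
    refine ⟨(↑u⁻¹ : D) * d, ?_⟩
    have hu : algebraMap D K (↑u⁻¹ : D) * algebraMap D K (↑u : D) = 1 := by
      rw [← map_mul, ← Units.val_mul, inv_mul_cancel, Units.val_one, map_one]
    calc algebraMap D K ((↑u⁻¹ : D) * d) = algebraMap D K (↑u⁻¹ : D) * (algebraMap D K (↑u : D) * x) := by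
          rw [map_mul, hxs]
      _ = x := by rw [← mul_assoc, hu, one_mul]
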